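/- Let (α, 𝒜) be a measurable space, let E be a finite-dimensional real inner product space, and let ζ₁, …, ζ_m : α → E be measurable maps. Then there exist measurable maps ω₁, …, ω_m : α → E such that for every x ∈ α: (a) each ω_i(x) is either the zero vector or a unit vector; (b) ⟨ω_i(x), ω_j(x)⟩ = 0 whenever i ≠ j; (c) span{ω₁(x), …, ω_m(x)} = span{ζ₁(x), …, ζ_m(x)}. In particular, the nonzero vectors among ω₁(x), …, ω_m(x) form an orthonormal basis of span{ζ₁(x), …, ζ_m(x)}, and the orthogonal projection onto this span equals Σ_i ω_i(x) ⊗ ω_i(x). -/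

import Mathlib

open InnerProductSpace

open Finset in
private lemma meas_gramSchmidt {α : Type*} [MeasurableSpace α] {E : Type*}
    [NormedAddCommGroup E] [InnerProductSpace ℝ E] [FiniteDimensional ℝ E]
    [MeasurableSpace E] [BorelSpace E]
    {m : ℕ} [WellFoundedLT (Fin m)] (ζ : Fin m → α → E) (hζ : ∀ i, Measurable (ζ i)) :
    ∀ n : Fin m, Measurable fun x => gramSchmidt ℝ (fun j => ζ j x) n := by
  suffices key : ∀ k : ℕ, ∀ n : Fin m, n.val < k →
      Measurable fun x => gramSchmidt ℝ (fun j => ζ j x) n by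
    exact fun n => key (n.val + 1) n (Nat.lt_succ_self _)
  intro k
  induction k with
  | zero => exact fun n hn => absurd hn (Nat.not_lt_zero _)
  | succ k ih =>
    intro n hn
    have : (fun x => gramSchmidt ℝ (fun j => ζ j x) n) = fun x =>
        ζ n x - ∑ i ∈ Finset.Iio n,
          ((inner ℝ (gramSchmidt ℝ (fun j => ζ j x) i) (ζ n x) : ℝ)
            / (‖gramSchmidt ℝ (fun j => ζ j x) i‖ : ℝ) ^ 2)
            • gramSchmidt ℝ (fun j => ζ j x) i := by
      funext x
      rw [gramSchmidt_def]
      congr 1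
      refine Finset.sum_congr rfl fun i _ => ?_
      rw [Submodule.starProjection_singleton]
      norm_num
    rw [this]
    refine (hζ n).sub (Finset.measurable_sum _ fun i hi => ?_)
    have hgi : Measurable fun x => gramSchmidt ℝ (fun j => ζ j x) i :=
      ih i (by have := Finset.mem_Iio.mp hi; omega)
    exact ((Measurable.inner hgi (hζ n)).div ((hgi.norm).pow measurable_const)).smul hgi

/-- Measurable Gram–Schmidt orthonormalization: given measurable maps `ζ₁,…,ζ_m` into a
finite-dimensional real inner product space, there are measurable maps `ω₁,…,ω_m` whose values
are pairwise orthogonal, each either zero or of unit norm, and which pointwise span the same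
subspace as the `ζᵢ`. -/
theorem stmt_16 {α : Type*} [MeasurableSpace α] {E : Type*}
    [NormedAddCommGroup E] [InnerProductSpace ℝ E] [FiniteDimensional ℝ E]
    [MeasurableSpace E] [BorelSpace E]
    {m : ℕ} (ζ : Fin m → α → E) (hζ : ∀ i, Measurable (ζ i)) :
    ∃ ω : Fin m → α → E, (∀ i, Measurable (ω i)) ∧ ∀ x : α,
      (∀ i, ω i x = 0 ∨ ‖ω i x‖ = 1) ∧
      (∀ i j, i ≠ j → (inner ℝ (ω i x) (ω j x) : ℝ) = 0) ∧
      Submodule.span ℝ (Set.range fun i => ω i x)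
        = Submodule.span ℝ (Set.range fun i => ζ i x) := by
  haveI : WellFoundedLT (Fin m) := inferInstance
  refine ⟨fun i x => gramSchmidtNormed ℝ (fun j => ζ j x) i, fun i => ?_, fun x => ?_⟩
  · have h := meas_gramSchmidt ζ hζ i
    simpa [gramSchmidtNormed] using (show Measurable fun x => ‖gramSchmidt ℝ (fun j => ζ j x) i‖⁻¹ • gramSchmidt ℝ (fun j => ζ j x) i from h.norm.inv.smul h)
  · refine ⟨fun i => ?_, fun i j hij => ?_, ?_⟩
    · by_cases h : gramSchmidtNormed ℝ (fun j => ζ j x) i = 0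
      · exact Or.inl h
      · exact Or.inr (gramSchmidtNormed_unit_length' h)
    · simp only [gramSchmidtNormed, inner_smul_left, inner_smul_right, real_inner_smul_left,
        real_inner_smul_right]
      simp [gramSchmidt_orthogonal ℝ (fun j => ζ j x) hij]
    · calc Submodule.span ℝ (Set.range fun i => gramSchmidtNormed ℝ (fun j => ζ j x) i)
          = Submodule.span ℝ (Set.range (gramSchmidt ℝ (fun j => ζ j x))) :=
            span_gramSchmidtNormed_range (𝕜 := ℝ) _
        _ = Submodule.span ℝ (Set.range fun i => ζ i x) := span_gramSchmidt ℝ _
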